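/- Let (x_n)_{n∈I} be a frame for H, (y_n)_{n∈I} its canonical dual, and E = {1,...,k} ⊊ I a finite set satisfying the MRC for (x_n). Then the operator T = I − Σ_{i=1}^k θ_{y_i, x_i} (where θ_{y,x}h = ⟨h,x⟩y) is invertible on H, and the sequence v_n = T⁻¹ y_n, n ∈ E^c, is the canonical dual frame of the reduced frame (x_n)_{n∈E^c}. -/

import Mathlib

noncomputable section

variable {H : Type*} [NormedAddCommGroup H] [InnerProductSpace ℂ H] [CompleteSpace H]

/-- `(x n)_{n ∈ I}` is a frame for `H` with frame bounds `A`, `B`. -/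
def IsFrameOn (x : ℕ → H) (I : Set ℕ) (A B : ℝ) : Prop :=
  0 < A ∧ 0 < B ∧ ∀ h : H,
    Summable (fun n : I => ‖(inner ℂ (x n) h : ℂ)‖ ^ 2) ∧
    A * ‖h‖ ^ 2 ≤ ∑' n : I, ‖(inner ℂ (x n) h : ℂ)‖ ^ 2 ∧
    ∑' n : I, ‖(inner ℂ (x n) h : ℂ)‖ ^ 2 ≤ B * ‖h‖ ^ 2

/-- `(y n)_{n ∈ I}` is the canonical dual of `(x n)_{n ∈ I}`, i.e. `y n = S⁻¹ (x n)`
where `S` is the frame operator of `(x n)_{n ∈ I}`. -/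
def IsCanonicalDualOn (y x : ℕ → H) (I : Set ℕ) : Prop :=
  ∃ S Sinv : H →L[ℂ] H,
    (∀ h : H, HasSum (fun n : I => (inner ℂ (x n) h : ℂ) • x n) (S h)) ∧
    Sinv.comp S = ContinuousLinearMap.id ℂ H ∧
    S.comp Sinv = ContinuousLinearMap.id ℂ H ∧
    ∀ n ∈ I, y n = Sinv (x n)

/-- The rank-one operator `θ_{y,x} : h ↦ ⟨h, x⟩ y`. -/
def rankOne (y x : H) : H →L[ℂ] H := (innerSL ℂ x).smulRight y

omit [CompleteSpace H] in
theorem rankOne_apply (y x h : H) : rankOne y x h = (inner ℂ x h : ℂ) • y := rfl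

set_option maxHeartbeats 2000000 in
/-- If `(y n)` is the canonical dual of the frame `(x n)_{n ∈ I}` and
`E = {1,…,k} ⊊ I` satisfies the MRC, then `T = I − Σ_{i=1}^k θ_{y i, x i}` is
invertible and `(T⁻¹ y n)_{n ∈ I \ E}` is the canonical dual of `(x n)_{n ∈ I \ E}`. -/
theorem stmt4 (x y : ℕ → H) (I : Set ℕ) (A B : ℝ) (hx : IsFrameOn x I A B)
    (hy : IsCanonicalDualOn y x I) (k : ℕ)
    (hE : ((Finset.Icc 1 k : Finset ℕ) : Set ℕ) ⊂ I)
    (hMRC : Dense ((Submodule.span ℂ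
      (x '' (I \ (Finset.Icc 1 k : Finset ℕ))) : Submodule ℂ H) : Set H)) :
    ∃ Tinv : H →L[ℂ] H,
      Tinv.comp (ContinuousLinearMap.id ℂ H - ∑ i ∈ Finset.Icc 1 k, rankOne (y i) (x i)) =
        ContinuousLinearMap.id ℂ H ∧
      (ContinuousLinearMap.id ℂ H - ∑ i ∈ Finset.Icc 1 k, rankOne (y i) (x i)).comp Tinv =
        ContinuousLinearMap.id ℂ H ∧
      IsCanonicalDualOn (fun n => Tinv (y n)) x (I \ (Finset.Icc 1 k : Finset ℕ)) := by
  classical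
  obtain ⟨S, Sinv, hS, hSinvS, hSSinv, hyx⟩ := hy
  set E : Finset ℕ := Finset.Icc 1 k with hEdef
  set K : H →L[ℂ] H := ∑ i ∈ E, rankOne (y i) (x i) with hK
  set T : H →L[ℂ] H := ContinuousLinearMap.id ℂ H - K with hT
  set SE : H →L[ℂ] H := S - ∑ i ∈ E, rankOne (x i) (x i) with hSE
  have hSinvS' : ∀ h : H, Sinv (S h) = h := fun h =>
    congrFun (congrArg (fun f => (f : H →L[ℂ] H).toFun) hSinvS) h
  have hSSinv' : ∀ h : H, S (Sinv h) = h := fun h =>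
    congrFun (congrArg (fun f => (f : H →L[ℂ] H).toFun) hSSinv) h
  have hSy : ∀ i ∈ E, S (y i) = x i := by
    intro i hi
    rw [hyx i (hE.subset hi), hSSinv']
  -- S ∘ T = SE
  have hST : ∀ h : H, S (T h) = SE h := by
    intro h
    simp only [hT, hK, hSE, ContinuousLinearMap.sub_apply, ContinuousLinearMap.id_apply,
      ContinuousLinearMap.sum_apply, rankOne_apply, map_sub, map_sum, map_smul]
    congr 1
    exact Finset.sum_congr rfl fun i hi => by rw [hSy i hi]
  -- HasSum over I \ E of the reduced frame operator
  have hSEsum : ∀ h : H,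
      HasSum (fun n : (I \ (E : Set ℕ) : Set ℕ) => (inner ℂ (x n) h : ℂ) • x n) (SE h) := by
    intro h
    set g : ℕ → H := fun n => (inner ℂ (x n) h : ℂ) • x n with hg
    have h1 : HasSum (I.indicator g) (S h) := by
      rw [← hasSum_subtype_iff_indicator]
      exact hS h
    have h2 : HasSum ((E : Set ℕ).indicator g) (∑ i ∈ E, g i) := by
      have hsum : ∑ i ∈ E, (E : Set ℕ).indicator g i = ∑ i ∈ E, g i :=
        Finset.sum_congr rfl fun i hi => Set.indicator_of_mem (by simpa using hi) g
      rw [← hsum]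
      exact hasSum_sum_of_ne_finset_zero fun b hb =>
        Set.indicator_of_notMem (by simpa using hb) g
    have h3 : (I \ (E : Set ℕ)).indicator g = I.indicator g - (E : Set ℕ).indicator g := by
      funext n
      simp only [Set.indicator_apply, Set.mem_diff, Pi.sub_apply]
      by_cases h1 : n ∈ I <;> by_cases h2 : n ∈ (E : Set ℕ)
      · simp [h1, h2]
      · simp [h1, h2]
      · exact absurd (hE.subset h2) h1
      · simp [h1, h2]
    have h4 : HasSum ((I \ (E : Set ℕ)).indicator g) (S h - ∑ i ∈ E, g i) := by
      rw [h3]; exact h1.sub h2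
    have h5 : SE h = S h - ∑ i ∈ E, g i := by
      simp only [hSE, ContinuousLinearMap.sub_apply, ContinuousLinearMap.sum_apply,
        rankOne_apply, hg]
    rw [h5]
    exact hasSum_subtype_iff_indicator.mpr h4
  -- Core lemma: ⟪h, SE h⟫ = 0 → h = 0
  have hcore : ∀ h : H, (inner ℂ h (SE h) : ℂ) = 0 → h = 0 := by
    intro h h0
    have h1 : HasSum (fun n : (I \ (E : Set ℕ) : Set ℕ) =>
        (inner ℂ (x n) h : ℂ) * (inner ℂ h (x n) : ℂ)) 0 := by
      have := (hSEsum h).mapL (innerSL ℂ h)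
      simpa [h0, inner_smul_right] using this
    have h2 : HasSum (fun n : (I \ (E : Set ℕ) : Set ℕ) =>
        ((Complex.normSq (inner ℂ (x n) h : ℂ) : ℝ) : ℂ)) 0 := by
      have hfun : (fun n : (I \ (E : Set ℕ) : Set ℕ) =>
          (inner ℂ (x n) h : ℂ) * (inner ℂ h (x n) : ℂ)) = fun n : (I \ (E : Set ℕ) : Set ℕ) =>
          ((Complex.normSq (inner ℂ (x n) h : ℂ) : ℝ) : ℂ) := by
        funext n
        rw [← inner_conj_symm h (x ↑n), Complex.mul_conj]
      rwa [hfun] at h1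
    have h3 : HasSum (fun n : (I \ (E : Set ℕ) : Set ℕ) =>
        Complex.normSq (inner ℂ (x n) h : ℂ)) 0 := by
      have := h2.mapL Complex.reCLM
      simpa using this
    have h4 : ∀ n : (I \ (E : Set ℕ) : Set ℕ), (inner ℂ (x n) h : ℂ) = 0 := by
      intro n
      have hle : Complex.normSq (inner ℂ (x n) h : ℂ) ≤ 0 :=
        le_hasSum h3 n fun j _ => Complex.normSq_nonneg _
      exact Complex.normSq_eq_zero.mp (le_antisymm hle (Complex.normSq_nonneg _))
    have h5 : h ∈ (Submodule.span ℂ (x '' (I \ (E : Set ℕ))))ᗮ := by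
      rw [Submodule.mem_orthogonal]
      intro u hu
      induction hu using Submodule.span_induction with
      | mem u hu =>
        obtain ⟨n, hn, rfl⟩ := hu
        exact h4 ⟨n, hn⟩
      | zero => simp
      | add u v _ _ hu hv => rw [inner_add_left, hu, hv, add_zero]
      | smul c u _ hu => rw [inner_smul_left, hu, mul_zero]
    have h6 : (Submodule.span ℂ (x '' (I \ (E : Set ℕ))))ᗮ = ⊥ := by
      rw [← Submodule.topologicalClosure_eq_top_iff]
      exact Submodule.dense_iff_topologicalClosure_eq_top.mp hMRC
    rw [h6] at h5
    simpa using h5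
  -- Injectivity of T
  have hTinj : ∀ h : H, T h = 0 → h = 0 := by
    intro h h0
    apply hcore
    have : SE h = 0 := by rw [← hST, h0, map_zero]
    rw [this, inner_zero_right]
  -- T is bounded below
  have hbdd : ∃ c : ℝ, 0 < c ∧ ∀ h : H, ‖h‖ ≤ c * ‖T h‖ := by
    by_contra hcon
    push_neg at hcon
    have hu : ∀ n : ℕ, ∃ u : H, ‖u‖ = 1 ∧ ‖T u‖ < 1 / (n + 1) := by
      intro n
      obtain ⟨h, hh⟩ := hcon ((n : ℝ) + 1) (by positivity)
      have hne : h ≠ 0 := by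
        intro h0
        rw [h0] at hh
        simp at hh
      have hpos : (0:ℝ) < ‖h‖ := norm_pos_iff.mpr hne
      have hnr : ‖((‖h‖ : ℂ))⁻¹‖ = ‖h‖⁻¹ := by
        rw [norm_inv, Complex.norm_real, norm_norm]
      refine ⟨((‖h‖ : ℂ))⁻¹ • h, ?_, ?_⟩
      · rw [norm_smul, hnr, inv_mul_cancel₀ (norm_ne_zero_iff.mpr hne)]
      · rw [map_smul, norm_smul, hnr, lt_div_iff₀ (by positivity)]
        have heq : ‖h‖⁻¹ * ‖T h‖ * ((n:ℝ) + 1) = (((n:ℝ) + 1) * ‖T h‖) / ‖h‖ := by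
          field_simp
        rw [heq, div_lt_one hpos]
        exact hh
    choose u hu1 hu2 using hu
    set W : Submodule ℂ H := Submodule.span ℂ (y '' (E : Set ℕ)) with hW
    haveI : FiniteDimensional ℂ W :=
      FiniteDimensional.span_of_finite ℂ ((E.finite_toSet).image y)
    have hKmem : ∀ h : H, K h ∈ W := by
      intro h
      have hKh : K h = ∑ i ∈ E, (inner ℂ (x i) h : ℂ) • y i := by
        simp [hK, ContinuousLinearMap.sum_apply, rankOne_apply]
      rw [hKh]
      exact Submodule.sum_mem _ fun i hi =>
        Submodule.smul_mem _ _ (Submodule.subset_span ⟨i, by simpa using hi, rfl⟩)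
    set g : ℕ → W := fun n => (⟨K (u n), hKmem (u n)⟩ : W) with hg
    have hgball : ∀ n, g n ∈ Metric.closedBall (0 : W) ‖K‖ := by
      intro n
      rw [Metric.mem_closedBall, dist_zero_right]
      show ‖K (u n)‖ ≤ ‖K‖
      calc ‖K (u n)‖ ≤ ‖K‖ * ‖u n‖ := K.le_opNorm _
        _ = ‖K‖ := by rw [hu1, mul_one]
    have hcpt : IsCompact (Metric.closedBall (0 : W) ‖K‖) := isCompact_closedBall _ _
    obtain ⟨a, -, φ, hφ, hconv⟩ := hcpt.tendsto_subseq hgball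
    have hT0 : Filter.Tendsto (fun n => T (u n)) Filter.atTop (nhds 0) :=
      squeeze_zero_norm (fun n => (hu2 n).le) tendsto_one_div_add_atTop_nhds_zero_nat
    have hTφ : Filter.Tendsto (fun n => T (u (φ n))) Filter.atTop (nhds 0) :=
      hT0.comp hφ.tendsto_atTop
    have hKφ : Filter.Tendsto (fun n => K (u (φ n))) Filter.atTop (nhds (a : H)) :=
      (continuous_subtype_val.tendsto a).comp hconv
    have heq : ∀ n, u (φ n) = T (u (φ n)) + K (u (φ n)) := by
      intro n
      simp [hT, ContinuousLinearMap.sub_apply]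
    have huφ : Filter.Tendsto (fun n => u (φ n)) Filter.atTop (nhds (0 + (a : H))) :=
      Filter.Tendsto.congr (fun n => (heq n).symm) (hTφ.add hKφ)
    have hnorm : ‖(a : H)‖ = 1 := by
      have h1 : Filter.Tendsto (fun n => ‖u (φ n)‖) Filter.atTop (nhds ‖(0 : H) + (a : H)‖) :=
        huφ.norm
      have h2 : (fun n => ‖u (φ n)‖) = fun _ => (1 : ℝ) := funext fun n => hu1 _
      rw [h2] at h1
      have := tendsto_nhds_unique h1 tendsto_const_nhds
      rw [zero_add] at this
      exact this
    have hTa : T ((0 : H) + (a : H)) = 0 := by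
      have h1 : Filter.Tendsto (fun n => T (u (φ n))) Filter.atTop
          (nhds (T ((0 : H) + (a : H)))) := (T.continuous.tendsto _).comp huφ
      exact tendsto_nhds_unique h1 hTφ
    have ha0 : (0 : H) + (a : H) = 0 := hTinj _ hTa
    rw [zero_add] at ha0
    rw [ha0] at hnorm
    simp at hnorm
  obtain ⟨c, hc, hcb⟩ := hbdd
  -- T has closed range
  have hclosed : IsClosed (Set.range ⇑T) := by
    have halip : AntilipschitzWith c.toNNReal ⇑T :=
      T.antilipschitz_of_bound fun x => by
        rw [Real.coe_toNNReal c hc.le]; exact hcb x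
    exact halip.isClosed_range T.uniformContinuous
  -- SE has dense range
  have horth : (LinearMap.range (SE : H →ₗ[ℂ] H))ᗮ = ⊥ := by
    rw [Submodule.eq_bot_iff]
    intro h hh
    rw [Submodule.mem_orthogonal] at hh
    apply hcore
    have h0 : (inner ℂ (SE h) h : ℂ) = 0 := hh (SE h) (LinearMap.mem_range_self _ h)
    rw [← inner_conj_symm, h0, map_zero]
  have hSEdense : Dense ((LinearMap.range (SE : H →ₗ[ℂ] H) : Submodule ℂ H) : Set H) :=
    Submodule.dense_iff_topologicalClosure_eq_top.mpr
      (Submodule.topologicalClosure_eq_top_iff.mpr horth)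
  have hdr : DenseRange ⇑SE := by
    have : ((LinearMap.range (SE : H →ₗ[ℂ] H) : Submodule ℂ H) : Set H) = Set.range ⇑SE := by
      ext z
      simp [LinearMap.mem_range]
    rwa [this] at hSEdense
  -- T has dense range
  have hTSinvSE : ∀ h : H, T h = Sinv (SE h) := fun h => by rw [← hST, hSinvS']
  have hSinvSurj : Function.Surjective ⇑Sinv := fun z => ⟨S z, hSinvS' z⟩
  have hTdense : DenseRange ⇑T := by
    have hcomp : DenseRange (⇑Sinv ∘ ⇑SE) :=
      hSinvSurj.denseRange.comp hdr Sinv.continuous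
    have : ⇑T = ⇑Sinv ∘ ⇑SE := funext hTSinvSE
    rwa [this]
  -- T is surjective
  have hrange : Set.range ⇑T = Set.univ := by
    rw [← hclosed.closure_eq]
    exact hTdense.closure_range
  have hTsurj : LinearMap.range (T : H →ₗ[ℂ] H) = ⊤ := by
    rw [LinearMap.range_eq_top]
    intro z
    have : z ∈ Set.range ⇑T := hrange ▸ Set.mem_univ z
    exact this
  have hTker : LinearMap.ker (T : H →ₗ[ℂ] H) = ⊥ := LinearMap.ker_eq_bot'.mpr hTinj
  set eT : H ≃L[ℂ] H := ContinuousLinearEquiv.ofBijective T hTker hTsurj with heT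
  set Tinv : H →L[ℂ] H := (eT.symm : H →L[ℂ] H) with hTinv
  have heTapp : ∀ h : H, eT h = T h := fun h => rfl
  have hTinvT : ∀ h : H, Tinv (T h) = h := by
    intro h
    show eT.symm (T h) = h
    rw [← heTapp h]
    exact eT.symm_apply_apply h
  have hTTinv : ∀ h : H, T (Tinv h) = h := by
    intro h
    show T (eT.symm h) = h
    rw [← heTapp (eT.symm h)]
    exact eT.apply_symm_apply h
  refine ⟨Tinv, ?_, ?_, ?_⟩
  · ext h
    exact hTinvT h
  · ext h
    exact hTTinv h
  · refine ⟨SE, Tinv.comp Sinv, hSEsum, ?_, ?_, ?_⟩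
    · ext h
      show Tinv (Sinv (SE h)) = h
      rw [← hST, hSinvS', hTinvT]
    · ext h
      show SE (Tinv (Sinv h)) = h
      rw [← hST, hTTinv, hSSinv']
    · intro n hn
      show Tinv (y n) = Tinv (Sinv (x n))
      rw [hyx n hn.1]

end
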